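/- arXiv:1806.07192 — 10 statements merged into one kernel-verified Lean document; each statement's English description precedes it below -/
import Mathlib

section
/- Let q ≥ 2 and n ≥ 2 be integers and let m be an integer with n ≤ m and m < (n−1) + (n−1)·ln(q−1)/(ln q − ln(q−1)). Consider the real polynomial p(X) = X^m − q·X^{m−1} + q^{m−n}. Then p has a real root μ with q−1 < μ < q; this root is simple (p'(μ) ≠ 0); it is the unique root of p in the interval (q−1, q); and every complex root z of p with z ≠ μ satisfies |z| < μ. -/
set_option maxHeartbeats 1600000 in
/-- For integers `q ≥ 2`, `n ≥ 2` and `n ≤ m` with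
`m < (n-1) + (n-1)·ln(q-1)/(ln q - ln(q-1))`, the polynomial
`p(X) = X^m - q·X^{m-1} + q^{m-n}` has a simple real root `μ ∈ (q-1, q)`,
unique in that interval, and every other complex root has modulus `< μ`. -/
theorem stmt_0 (q n m : ℕ) (hq : 2 ≤ q) (hn : 2 ≤ n) (hnm : n ≤ m)
    (hm : (m : ℝ) < ((n : ℝ) - 1) +
      ((n : ℝ) - 1) * Real.log ((q : ℝ) - 1) /
        (Real.log (q : ℝ) - Real.log ((q : ℝ) - 1))) :
    ∃ μ : ℝ, ((q : ℝ) - 1 < μ ∧ μ < q) ∧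
      (μ ^ m - (q : ℝ) * μ ^ (m - 1) + (q : ℝ) ^ (m - n) = 0) ∧
      (deriv (fun x : ℝ => x ^ m - (q : ℝ) * x ^ (m - 1) + (q : ℝ) ^ (m - n)) μ ≠ 0) ∧
      (∀ x : ℝ, (q : ℝ) - 1 < x → x < q →
        x ^ m - (q : ℝ) * x ^ (m - 1) + (q : ℝ) ^ (m - n) = 0 → x = μ) ∧
      (∀ z : ℂ, z ^ m - (q : ℂ) * z ^ (m - 1) + (q : ℂ) ^ (m - n) = 0 →
        z ≠ (μ : ℂ) → ‖z‖ < μ) := by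
  have hm2 : 2 ≤ m := le_trans hn hnm
  have hQ2 : (2:ℝ) ≤ (q:ℝ) := by exact_mod_cast hq
  have hQm1pos : (0:ℝ) < (q:ℝ) - 1 := by linarith
  have hQ0 : (0:ℝ) < (q:ℝ) := by linarith
  have hmR : (0:ℝ) < (m:ℝ) := by
    have : (2:ℝ) ≤ (m:ℝ) := by exact_mod_cast hm2
    linarith
  have hmR2 : (2:ℝ) ≤ (m:ℝ) := by exact_mod_cast hm2
  -- key inequality K : q^(m-n+1) < (q-1)^m
  have hlog : Real.log ((q:ℝ) - 1) < Real.log (q:ℝ) := Real.log_lt_log hQm1pos (by linarith)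
  have hd : 0 < Real.log (q:ℝ) - Real.log ((q:ℝ) - 1) := by linarith
  have h1 : ((m:ℝ) - n + 1) * Real.log (q:ℝ) < (m:ℝ) * Real.log ((q:ℝ) - 1) := by
    have h2 := mul_lt_mul_of_pos_right hm hd
    rw [add_mul, div_mul_cancel₀ _ (ne_of_gt hd)] at h2
    nlinarith [h2]
  have hK : (q:ℝ) ^ (m - n + 1) < ((q:ℝ) - 1) ^ m := by
    have hcast : ((m - n + 1 : ℕ) : ℝ) = (m:ℝ) - (n:ℝ) + 1 := by
      rw [Nat.cast_add, Nat.cast_one, Nat.cast_sub hnm]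
    have hlogs : Real.log ((q:ℝ) ^ (m - n + 1)) < Real.log (((q:ℝ) - 1) ^ m) := by
      rw [Real.log_pow, Real.log_pow, hcast]
      exact h1
    exact (Real.log_lt_log_iff (pow_pos hQ0 _) (pow_pos hQm1pos _)).mp hlogs
  rw [pow_succ] at hK
  -- hK : q^(m-n) * q < (q-1)^m
  have hkpos : (0:ℝ) < (q:ℝ) ^ (m - n) := pow_pos hQ0 _
  have hpowm : ((q:ℝ) - 1) ^ m = ((q:ℝ) - 1) ^ (m - 1) * ((q:ℝ) - 1) := by
    rw [← pow_succ]; congr 1; omega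
  have hk2 : (q:ℝ) ^ (m - n) < ((q:ℝ) - 1) ^ (m - 1) := by
    nlinarith [pow_pos hQm1pos (m - 1)]
  set f : ℝ → ℝ := fun x : ℝ => x ^ m - (q:ℝ) * x ^ (m - 1) + (q:ℝ) ^ (m - n) with hfdef
  have hcont : Continuous f := by fun_prop
  have hfq1 : f ((q:ℝ) - 1) < 0 := by
    show ((q:ℝ)-1) ^ m - (q:ℝ) * ((q:ℝ)-1) ^ (m - 1) + (q:ℝ) ^ (m - n) < 0
    nlinarith [hpowm, hk2]
  have hfQ : 0 < f (q:ℝ) := by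
    show 0 < (q:ℝ) ^ m - (q:ℝ) * (q:ℝ) ^ (m - 1) + (q:ℝ) ^ (m - n)
    have : (q:ℝ) ^ m = (q:ℝ) * (q:ℝ) ^ (m - 1) := by
      rw [← pow_succ']; congr 1; omega
    nlinarith [hkpos]
  -- existence of μ
  obtain ⟨μ, hμI, hμ0⟩ :=
    intermediate_value_Ioo (by linarith : (q:ℝ) - 1 ≤ (q:ℝ)) hcont.continuousOn ⟨hfq1, hfQ⟩
  -- derivative
  have hderiv : ∀ x : ℝ, HasDerivAt f
      ((m:ℝ) * x ^ (m - 1) - (q:ℝ) * (((m - 1 : ℕ)):ℝ) * x ^ (m - 1 - 1)) x := by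
    intro x
    have h1' : HasDerivAt (fun x : ℝ => x ^ m) ((m:ℝ) * x ^ (m - 1)) x := hasDerivAt_pow m x
    have h2' : HasDerivAt (fun x : ℝ => (q:ℝ) * x ^ (m - 1))
        ((q:ℝ) * (((m - 1 : ℕ)):ℝ) * x ^ (m - 1 - 1)) x := by
      simpa [mul_assoc] using (hasDerivAt_pow (m - 1) x).const_mul (q:ℝ)
    simpa [hfdef] using (h1'.sub h2').add_const ((q:ℝ) ^ (m - n))
  have hderiv' : ∀ x : ℝ, deriv f x
      = (m:ℝ) * x ^ (m - 1) - (q:ℝ) * (((m - 1 : ℕ)):ℝ) * x ^ (m - 1 - 1) :=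
    fun x => (hderiv x).deriv
  have hcastm1 : (((m - 1 : ℕ)):ℝ) = (m:ℝ) - 1 := by
    rw [Nat.cast_sub (by omega)]; norm_num
  have hds : ∀ x : ℝ, (m:ℝ) * x ^ (m - 1) - (q:ℝ) * (((m - 1 : ℕ)):ℝ) * x ^ (m - 1 - 1)
      = x ^ (m - 1 - 1) * ((m:ℝ) * x - (q:ℝ) * ((m:ℝ) - 1)) := by
    intro x
    have e1 : x ^ (m - 1) = x ^ (m - 1 - 1) * x := by rw [← pow_succ]; congr 1; omega
    rw [e1, hcastm1]; ring
  -- critical point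
  set cc : ℝ := (q:ℝ) * ((m:ℝ) - 1) / (m:ℝ) with hccdef
  have hcc_pos : 0 < cc := div_pos (mul_pos hQ0 (by linarith)) hmR
  have hcc_lt_Q : cc < (q:ℝ) := by
    rw [hccdef, div_lt_iff₀ hmR]; nlinarith
  have hmono : StrictMonoOn f (Set.Icc cc (q:ℝ)) := by
    apply strictMonoOn_of_deriv_pos (convex_Icc _ _) hcont.continuousOn
    intro x hx
    rw [interior_Icc] at hx
    rw [hderiv' x, hds x]
    apply mul_pos (pow_pos (lt_trans hcc_pos hx.1) _)
    have hxc : cc < x := hx.1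
    rw [hccdef, div_lt_iff₀ hmR] at hxc
    linarith
  have hanti : StrictAntiOn f (Set.Icc ((q:ℝ) - 1) cc) := by
    apply strictAntiOn_of_deriv_neg (convex_Icc _ _) hcont.continuousOn
    intro x hx
    rw [interior_Icc] at hx
    rw [hderiv' x, hds x]
    have hx0 : 0 < x := by linarith [hx.1]
    apply mul_neg_of_pos_of_neg (pow_pos hx0 _)
    have hxc : x < cc := hx.2
    rw [hccdef, lt_div_iff₀ hmR] at hxc
    linarith
  have hroot_gt : ∀ x : ℝ, (q:ℝ) - 1 < x → x < (q:ℝ) → f x = 0 → cc < x := by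
    intro x h1' h2' h0'
    by_contra hle
    push_neg at hle
    have hx_mem : x ∈ Set.Icc ((q:ℝ) - 1) cc := ⟨le_of_lt h1', hle⟩
    have hq1_mem : ((q:ℝ) - 1) ∈ Set.Icc ((q:ℝ) - 1) cc :=
      ⟨le_refl _, le_trans (le_of_lt h1') hle⟩
    have := hanti hq1_mem hx_mem h1'
    linarith
  have hμc : cc < μ := hroot_gt μ hμI.1 hμI.2 hμ0
  have hμpos : 0 < μ := lt_trans hcc_pos hμc
  have hμQ : μ < (q:ℝ) := hμI.2
  have hμcc : (q:ℝ) * ((m:ℝ) - 1) < μ * (m:ℝ) := by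
    rw [hccdef, div_lt_iff₀ hmR] at hμc; exact hμc
  refine ⟨μ, ⟨hμI.1, hμI.2⟩, hμ0, ?_, ?_, ?_⟩
  · -- simple root
    rw [hderiv' μ, hds μ]
    apply ne_of_gt
    apply mul_pos (pow_pos hμpos _)
    linarith [hμcc]
  · -- uniqueness
    intro x hx1 hx2 hx0
    have hx0' : f x = 0 := hx0
    have hxc : cc < x := hroot_gt x hx1 hx2 hx0'
    exact hmono.injOn ⟨le_of_lt hxc, le_of_lt hx2⟩ ⟨le_of_lt hμc, le_of_lt hμQ⟩
      (hx0'.trans hμ0.symm)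
  · -- dominance
    intro z hz hzμ
    by_contra hcon
    push_neg at hcon
    have hrpos : 0 < ‖z‖ := lt_of_lt_of_le hμpos hcon
    have hμ0' : μ ^ m - (q:ℝ) * μ ^ (m - 1) + (q:ℝ) ^ (m - n) = 0 := hμ0
    have e1μ : μ ^ m = μ ^ (m - 1) * μ := by rw [← pow_succ]; congr 1; omega
    have hμr : ((q:ℝ) - μ) * μ ^ (m - 1) = (q:ℝ) ^ (m - n) := by
      linear_combination e1μ - hμ0'
    have hμC : ((q:ℂ) - (μ:ℂ)) * (μ:ℂ) ^ (m - 1) = (q:ℂ) ^ (m - n) := by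
      have := congrArg (fun t : ℝ => (t : ℂ)) hμr
      push_cast at this
      exact this
    set S : ℂ := ∑ i ∈ Finset.range (m - 1), z ^ i * (μ:ℂ) ^ (m - 1 - 1 - i) with hSdef
    have hgeom : S * (z - (μ:ℂ)) = z ^ (m - 1) - (μ:ℂ) ^ (m - 1) :=
      geom_sum₂_mul z (μ:ℂ) (m - 1)
    have e1z : z ^ m = z ^ (m - 1) * z := by rw [← pow_succ]; congr 1; omega
    have hfac : z ^ m - (q:ℂ) * z ^ (m - 1) + (q:ℂ) ^ (m - n)
        = (z - (μ:ℂ)) * (z ^ (m - 1) - ((q:ℂ) - (μ:ℂ)) * S) := by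
      linear_combination e1z - hμC + ((q:ℂ) - (μ:ℂ)) * hgeom
    rw [hz] at hfac
    have hfz : z ^ (m - 1) = ((q:ℂ) - (μ:ℂ)) * S := by
      have := (mul_eq_zero.mp hfac.symm).resolve_left (sub_ne_zero.mpr hzμ)
      exact sub_eq_zero.mp this
    have habsq : ‖(q:ℂ) - (μ:ℂ)‖ = (q:ℝ) - μ := by
      rw [show ((q:ℂ) - (μ:ℂ)) = ((((q:ℝ) - μ : ℝ)):ℂ) by push_cast; ring,
        Complex.norm_real, Real.norm_of_nonneg (by linarith)]
    have hrS : ‖z‖ ^ (m - 1) = ((q:ℝ) - μ) * ‖S‖ := by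
      have := congrArg norm hfz
      rw [norm_mul, norm_pow, habsq] at this
      exact this
    have hSbound : ‖S‖ ≤ ((m - 1 : ℕ) : ℝ) * ‖z‖ ^ (m - 1 - 1) := by
      refine le_trans (norm_sum_le _ _) ?_
      have hterm : ∀ i ∈ Finset.range (m - 1),
          ‖z ^ i * (μ:ℂ) ^ (m - 1 - 1 - i)‖ ≤ ‖z‖ ^ (m - 1 - 1) := by
        intro i hi
        rw [Finset.mem_range] at hi
        rw [norm_mul, norm_pow, norm_pow, Complex.norm_real, Real.norm_of_nonneg hμpos.le]
        calc ‖z‖ ^ i * μ ^ (m - 1 - 1 - i)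
            ≤ ‖z‖ ^ i * ‖z‖ ^ (m - 1 - 1 - i) := by
              apply mul_le_mul_of_nonneg_left
                (pow_le_pow_left₀ hμpos.le hcon _)
                (pow_nonneg (norm_nonneg z) i)
          _ = ‖z‖ ^ (m - 1 - 1) := by rw [← pow_add]; congr 1; omega
      refine le_trans (Finset.sum_le_sum hterm) ?_
      rw [Finset.sum_const, Finset.card_range, nsmul_eq_mul]
    have h5 : ‖z‖ ^ (m - 1)
        ≤ ((q:ℝ) - μ) * (((m - 1 : ℕ) : ℝ) * ‖z‖ ^ (m - 1 - 1)) := by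
      rw [hrS]
      exact mul_le_mul_of_nonneg_left hSbound (by linarith)
    have e1r : ‖z‖ ^ (m - 1) = ‖z‖ ^ (m - 1 - 1) * ‖z‖ := by
      rw [← pow_succ]; congr 1; omega
    have hpow : 0 < ‖z‖ ^ (m - 1 - 1) := pow_pos hrpos _
    rw [e1r, hcastm1] at h5
    have h6 : ‖z‖ ≤ ((q:ℝ) - μ) * ((m:ℝ) - 1) := by nlinarith [h5, hpow]
    have h7 : ((q:ℝ) - μ) * ((m:ℝ) - 1) < μ := by nlinarith [hμcc]
    linarith
end

section
/- Let q ≥ 2 and n ≥ 2 be integers and let m be an integer with n ≤ m and m < (n−1) + (n−1)·ln(q−1)/(ln q − ln(q−1)). Then the real polynomial p(X) = X^m − q·X^{m−1} + q^{m−n} has exactly two positive real roots: there exist real numbers μ′ and μ with 0 < μ′ < q−1 < μ < q such that p(μ′) = 0, p(μ) = 0, and every positive real root of p equals μ′ or μ. -/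

private lemma aux_two_roots (Q k : ℝ) (a : ℕ) (hQ : 3 ≤ Q) (hk0 : 0 < k)
    (hkey : k < (Q - 1) ^ (a + 1)) :
    ∃ μ' μ : ℝ, 0 < μ' ∧ μ' < Q - 1 ∧ Q - 1 < μ ∧ μ < Q ∧
      (μ' ^ (a + 2) - Q * μ' ^ (a + 1) + k = 0) ∧
      (μ ^ (a + 2) - Q * μ ^ (a + 1) + k = 0) ∧
      (∀ x : ℝ, 0 < x → x ^ (a + 2) - Q * x ^ (a + 1) + k = 0 → x = μ' ∨ x = μ) := by
  have hQ0 : (0:ℝ) < Q := by linarith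
  set f : ℝ → ℝ := fun x => x ^ (a + 2) - Q * x ^ (a + 1) + k with hf
  have hfc : Continuous f := by fun_prop
  have hderiv : ∀ x : ℝ, HasDerivAt f
      (((a:ℝ)+2) * x ^ (a+1) - Q * (((a:ℝ)+1) * x ^ a)) x := by
    intro x
    have h1 : HasDerivAt (fun x : ℝ => x ^ (a+2)) (((a:ℝ)+2) * x ^ (a+1)) x := by
      have h := hasDerivAt_pow (a+2) x
      have e : a + 2 - 1 = a + 1 := by omega
      rw [e] at h
      push_cast at h
      exact h
    have h2 : HasDerivAt (fun x : ℝ => x ^ (a+1)) (((a:ℝ)+1) * x ^ a) x := by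
      have h := hasDerivAt_pow (a+1) x
      have e : a + 1 - 1 = a := by omega
      rw [e] at h
      push_cast at h
      exact h
    exact ((h1.sub (h2.const_mul Q)).add_const k)
  set c : ℝ := Q * ((a:ℝ)+1) / ((a:ℝ)+2) with hc
  have hc0 : 0 < c := by positivity
  have hanti : StrictAntiOn f (Set.Icc 0 c) := by
    apply strictAntiOn_of_deriv_neg (convex_Icc 0 c) hfc.continuousOn
    intro x hx
    rw [interior_Icc] at hx
    rw [(hderiv x).deriv]
    have hx0 : 0 < x := hx.1
    have h1 : ((a:ℝ)+2) * x < Q * ((a:ℝ)+1) := by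
      have hxc : x < c := hx.2
      rw [hc, lt_div_iff₀ (by positivity)] at hxc
      linarith
    have hpa : 0 < x ^ a := pow_pos hx0 a
    have e : x ^ (a+1) = x ^ a * x := pow_succ x a
    nlinarith
  have hmono : StrictMonoOn f (Set.Ici c) := by
    apply strictMonoOn_of_deriv_pos (convex_Ici c) hfc.continuousOn
    intro x hx
    rw [interior_Ici] at hx
    rw [(hderiv x).deriv]
    have hx0 : 0 < x := lt_trans hc0 hx
    have h1 : Q * ((a:ℝ)+1) < ((a:ℝ)+2) * x := by
      have hxc : c < x := hx
      rw [hc, div_lt_iff₀ (by positivity)] at hxc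
      linarith
    have hpa : 0 < x ^ a := pow_pos hx0 a
    have e : x ^ (a+1) = x ^ a * x := pow_succ x a
    nlinarith
  have hf0 : f 0 = k := by simp [hf]
  have hfq1 : f (Q-1) < 0 := by
    have e : (Q-1) ^ (a+2) = (Q-1) ^ (a+1) * (Q-1) := pow_succ _ _
    have : f (Q-1) = (Q-1) ^ (a+2) - Q * (Q-1) ^ (a+1) + k := rfl
    rw [this, e]
    nlinarith
  have hfq : f Q = k := by
    have : f Q = Q ^ (a+2) - Q * Q ^ (a+1) + k := rfl
    rw [this, pow_succ]
    ring
  obtain ⟨μ', hμ'mem, hμ'eq⟩ := intermediate_value_Ioo' (by linarith : (0:ℝ) ≤ Q - 1)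
    hfc.continuousOn (show (0:ℝ) ∈ Set.Ioo (f (Q-1)) (f 0) from ⟨hfq1, by rw [hf0]; exact hk0⟩)
  obtain ⟨μ, hμmem, hμeq⟩ := intermediate_value_Ioo (by linarith : Q - 1 ≤ Q)
    hfc.continuousOn (show (0:ℝ) ∈ Set.Ioo (f (Q-1)) (f Q) from ⟨hfq1, by rw [hfq]; exact hk0⟩)
  have hμ'c : μ' ≤ c := by
    by_contra h
    push_neg at h
    have h1 : f μ' < f (Q-1) := hmono (le_of_lt h) (le_of_lt (lt_trans h hμ'mem.2)) hμ'mem.2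
    rw [hμ'eq] at h1
    linarith
  have hcμ : c ≤ μ := by
    by_contra h
    push_neg at h
    have h1 : f μ < f (Q-1) :=
      hanti ⟨by linarith, le_of_lt (lt_trans hμmem.1 h)⟩ ⟨by linarith [hμmem.1], le_of_lt h⟩ hμmem.1
    rw [hμeq] at h1
    linarith
  refine ⟨μ', μ, hμ'mem.1, hμ'mem.2, hμmem.1, hμmem.2, hμ'eq, hμeq, ?_⟩
  intro x hx hxe
  have hfx : f x = 0 := hxe
  rcases le_total x c with hxc | hxc
  · left
    exact hanti.injOn ⟨le_of_lt hx, hxc⟩ ⟨le_of_lt hμ'mem.1, hμ'c⟩ (by rw [hfx, hμ'eq])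
  · right
    exact hmono.injOn hxc hcμ (by rw [hfx, hμeq])

/-- For integers `q ≥ 2`, `n ≥ 2` and `n ≤ m` with
`m < (n-1) + (n-1)·ln(q-1)/(ln q - ln(q-1))`, the polynomial
`p(X) = X^m - q·X^{m-1} + q^{m-n}` has exactly two positive real roots:
one in `(0, q-1)` and one in `(q-1, q)`. -/
theorem stmt_1 (q n m : ℕ) (hq : 2 ≤ q) (hn : 2 ≤ n) (hnm : n ≤ m)
    (hm : (m : ℝ) < ((n : ℝ) - 1) +
      ((n : ℝ) - 1) * Real.log ((q : ℝ) - 1) /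
        (Real.log (q : ℝ) - Real.log ((q : ℝ) - 1))) :
    ∃ μ' μ : ℝ, 0 < μ' ∧ μ' < (q : ℝ) - 1 ∧ (q : ℝ) - 1 < μ ∧ μ < q ∧
      (μ' ^ m - (q : ℝ) * μ' ^ (m - 1) + (q : ℝ) ^ (m - n) = 0) ∧
      (μ ^ m - (q : ℝ) * μ ^ (m - 1) + (q : ℝ) ^ (m - n) = 0) ∧
      (∀ x : ℝ, 0 < x → x ^ m - (q : ℝ) * x ^ (m - 1) + (q : ℝ) ^ (m - n) = 0 →
        x = μ' ∨ x = μ) := by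
  have hq3 : 3 ≤ q := by
    by_contra h
    have hq2 : q = 2 := by omega
    subst hq2
    norm_num at hm
    have hnm' : (n:ℝ) ≤ m := by exact_mod_cast hnm
    linarith
  have hQ : (3:ℝ) ≤ (q:ℝ) := by exact_mod_cast hq3
  have hQ1 : (1:ℝ) < (q:ℝ) - 1 := by linarith
  have hl : 0 < Real.log ((q:ℝ) - 1) := Real.log_pos hQ1
  have hLl : Real.log ((q:ℝ) - 1) < Real.log (q:ℝ) := Real.log_lt_log (by linarith) (by linarith)
  have hD : 0 < Real.log (q:ℝ) - Real.log ((q:ℝ) - 1) := by linarith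
  have h3 : (m:ℝ) - ((n:ℝ) - 1) <
      ((n:ℝ) - 1) * Real.log ((q:ℝ) - 1) / (Real.log (q:ℝ) - Real.log ((q:ℝ) - 1)) := by
    linarith
  have h2 : ((m:ℝ) - ((n:ℝ) - 1)) * (Real.log (q:ℝ) - Real.log ((q:ℝ) - 1)) <
      ((n:ℝ) - 1) * Real.log ((q:ℝ) - 1) := by
    rw [← lt_div_iff₀ hD]
    exact h3
  have hkey' : ((m:ℝ) - n) * Real.log (q:ℝ) < ((m:ℝ) - 1) * Real.log ((q:ℝ) - 1) := by
    nlinarith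
  have hc1 : ((m - n : ℕ):ℝ) = (m:ℝ) - n := by
    push_cast [hnm]; ring
  have hc2 : ((m - 1 : ℕ):ℝ) = (m:ℝ) - 1 := by
    have : 1 ≤ m := by omega
    push_cast [this]; ring
  have key : (q:ℝ) ^ (m - n) < ((q:ℝ) - 1) ^ (m - 1) := by
    have hpos : (0:ℝ) < (q:ℝ) ^ (m - n) := by positivity
    have hpos2 : (0:ℝ) < ((q:ℝ) - 1) ^ (m - 1) := by positivity
    rw [← Real.exp_log hpos, ← Real.exp_log hpos2]
    apply Real.exp_lt_exp.mpr
    rw [Real.log_pow, Real.log_pow, hc1, hc2]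
    exact hkey'
  obtain ⟨a, rfl⟩ : ∃ a, m = a + 2 := ⟨m - 2, by omega⟩
  have em1 : a + 2 - 1 = a + 1 := by omega
  rw [em1] at key ⊢
  have hk0 : (0:ℝ) < (q:ℝ) ^ (a + 2 - n) := by positivity
  exact aux_two_roots (q:ℝ) ((q:ℝ) ^ (a + 2 - n)) a hQ hk0 key
end

section
/- Let q ≥ 2 and n ≥ 2 be integers and let m be an integer with n ≤ m and m < (n−1) + (n−1)·ln(q−1)/(ln q − ln(q−1)). Let μ_m be the unique real root of X^m − q·X^{m−1} + q^{m−n} in the interval (q−1, q), and let μ_{m+1} be the unique real root of X^{m+1} − q·X^m + q^{m+1−n} in (q−1, q). Then μ_{m+1} < μ_m, and consequently −ln(μ_m/q) < −ln(μ_{m+1}/q). -/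
/-- If `μ_m` is the unique real root of `X^m - q·X^{m-1} + q^{m-n}` in `(q-1, q)`
and `μ_{m+1}` is the unique real root of `X^{m+1} - q·X^m + q^{m+1-n}` in `(q-1, q)`,
then `μ_{m+1} < μ_m`, and hence `-ln(μ_m/q) < -ln(μ_{m+1}/q)`. -/
theorem stmt_2 (q n m : ℕ) (hq : 2 ≤ q) (hn : 2 ≤ n) (hnm : n ≤ m)
    (hm : (m : ℝ) < ((n : ℝ) - 1) +
      ((n : ℝ) - 1) * Real.log ((q : ℝ) - 1) /
        (Real.log (q : ℝ) - Real.log ((q : ℝ) - 1)))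
    (μm μm1 : ℝ)
    (hμm_mem : (q : ℝ) - 1 < μm ∧ μm < q)
    (hμm_root : μm ^ m - (q : ℝ) * μm ^ (m - 1) + (q : ℝ) ^ (m - n) = 0)
    (hμm_uniq : ∀ x : ℝ, (q : ℝ) - 1 < x → x < q →
      x ^ m - (q : ℝ) * x ^ (m - 1) + (q : ℝ) ^ (m - n) = 0 → x = μm)
    (hμm1_mem : (q : ℝ) - 1 < μm1 ∧ μm1 < q)
    (hμm1_root : μm1 ^ (m + 1) - (q : ℝ) * μm1 ^ m + (q : ℝ) ^ (m + 1 - n) = 0)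
    (hμm1_uniq : ∀ x : ℝ, (q : ℝ) - 1 < x → x < q →
      x ^ (m + 1) - (q : ℝ) * x ^ m + (q : ℝ) ^ (m + 1 - n) = 0 → x = μm1) :
    μm1 < μm ∧ -Real.log (μm / q) < -Real.log (μm1 / q) := by
  obtain ⟨ha1, ha2⟩ := hμm_mem
  obtain ⟨hb1, hb2⟩ := hμm1_mem
  have hq2 : (2:ℝ) ≤ (q:ℝ) := by exact_mod_cast hq
  have hqm1pos : (0:ℝ) < (q:ℝ) - 1 := by linarith
  have hq0 : (0:ℝ) < (q:ℝ) := by linarith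
  have hD : 0 < Real.log (q:ℝ) - Real.log ((q:ℝ) - 1) := by
    have := Real.log_lt_log hqm1pos (by linarith : (q:ℝ) - 1 < q)
    linarith
  have hL : 0 ≤ Real.log ((q:ℝ) - 1) := Real.log_nonneg (by linarith)
  -- from hm: q^(m+1-n) < (q-1)^m
  have hcast : ((m + 1 - n : ℕ) : ℝ) = (m : ℝ) + 1 - n := by
    have h : n ≤ m + 1 := by omega
    push_cast [Nat.cast_sub h]
    ring
  have hkey : ((m + 1 - n : ℕ) : ℝ) * Real.log (q:ℝ)
      < (m : ℝ) * Real.log ((q:ℝ) - 1) := by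
    rw [hcast]
    have h2 : (m : ℝ) - ((n:ℝ) - 1)
        < ((n:ℝ) - 1) * Real.log ((q:ℝ)-1) / (Real.log (q:ℝ) - Real.log ((q:ℝ)-1)) := by
      linarith
    have h1 : ((m : ℝ) - ((n:ℝ) - 1)) * (Real.log (q:ℝ) - Real.log ((q:ℝ)-1))
        < ((n:ℝ) - 1) * Real.log ((q:ℝ)-1) := (lt_div_iff₀ hD).mp h2
    have e : ((m:ℝ) + 1 - n) * Real.log (q:ℝ) - (m:ℝ) * Real.log ((q:ℝ)-1)
        = ((m:ℝ) - ((n:ℝ) - 1)) * (Real.log (q:ℝ) - Real.log ((q:ℝ)-1))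
          - ((n:ℝ) - 1) * Real.log ((q:ℝ)-1) := by ring
    linarith
  have hlt : (q:ℝ) ^ (m + 1 - n) < ((q:ℝ) - 1) ^ m := by
    have h1 : Real.log ((q:ℝ) ^ (m + 1 - n)) < Real.log (((q:ℝ) - 1) ^ m) := by
      rw [Real.log_pow, Real.log_pow]
      exact_mod_cast hkey
    exact (Real.log_lt_log_iff (pow_pos hq0 _) (pow_pos hqm1pos _)).mp h1
  -- sign of g at q-1 and at μm, where g x = x^(m+1) - q x^m + q^(m+1-n)
  set g : ℝ → ℝ := fun x => x ^ (m + 1) - (q:ℝ) * x ^ m + (q:ℝ) ^ (m + 1 - n) with hg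
  have hga : g ((q:ℝ) - 1) < 0 := by
    have : ((q:ℝ) - 1) ^ (m + 1) = ((q:ℝ) - 1) ^ m * ((q:ℝ) - 1) := pow_succ _ _
    simp only [hg, this]
    have e : ((q:ℝ)-1) ^ m * ((q:ℝ)-1) - (q:ℝ) * ((q:ℝ)-1) ^ m = -(((q:ℝ)-1) ^ m) := by
      ring
    linarith
  have hm1 : m - 1 + 1 = m := by omega
  have hmn : m + 1 - n = (m - n) + 1 := by omega
  have hgb : g μm = (q:ℝ) ^ (m - n) * ((q:ℝ) - μm) := by
    have e1 : μm ^ m = μm ^ (m - 1) * μm := by rw [← pow_succ, hm1]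
    have e2 : μm ^ (m + 1) = μm ^ m * μm := pow_succ _ _
    have e3 : (q:ℝ) ^ (m + 1 - n) = (q:ℝ) ^ (m - n) * q := by rw [hmn, pow_succ]
    have key : μm ^ (m + 1) - (q:ℝ) * μm ^ m = -((q:ℝ) ^ (m - n)) * μm := by
      have e4 : μm ^ (m + 1) - (q:ℝ) * μm ^ m
          = (μm ^ m - (q:ℝ) * μm ^ (m - 1)) * μm := by
        rw [e2]; nth_rewrite 2 [e1]; ring
      have e5 : μm ^ m - (q:ℝ) * μm ^ (m - 1) = -((q:ℝ) ^ (m - n)) := by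
        linarith [hμm_root]
      rw [e4, e5]
    simp only [hg]
    rw [e3]
    linear_combination key
  have hgbpos : 0 < g μm := by
    rw [hgb]
    exact mul_pos (pow_pos hq0 _) (by linarith)
  -- IVT
  have hgc : ContinuousOn g (Set.Icc ((q:ℝ) - 1) μm) := by
    apply Continuous.continuousOn
    fun_prop
  have hmem : (0:ℝ) ∈ Set.Ioo (g ((q:ℝ) - 1)) (g μm) := ⟨hga, hgbpos⟩
  obtain ⟨x, hxI, hxg⟩ := intermediate_value_Ioo (le_of_lt ha1) hgc hmem
  have hx1 : (q:ℝ) - 1 < x := hxI.1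
  have hx2 : x < μm := hxI.2
  have hxq : x < q := lt_trans hx2 ha2
  have hxeq : x = μm1 := hμm1_uniq x hx1 hxq hxg
  have hmain : μm1 < μm := hxeq ▸ hx2
  refine ⟨hmain, ?_⟩
  have hpos : 0 < μm1 / q := div_pos (by linarith) hq0
  have hdiv : μm1 / q < μm / q := by gcongr
  have := Real.log_lt_log hpos hdiv
  linarith
end

section
/- Let K be a field, let k be a positive integer, let M be an invertible k×k matrix over K, and let t, c, F ∈ K and G : Fin k → K. Suppose that (t − c)·F + t·(∑_{i} G i) = t and that for every index i one has F = t·(∑_{j} M i j · G j). Then F·((t − c) + a) = t, where a = ∑_{i,j} (M⁻¹) i j is the sum of all entries of the inverse matrix of M. -/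
/-- Linear-algebra content of the formula `F(z) = z/((z-q) + a(z))`:
if `(t-c)·F + t·∑ᵢ Gᵢ = t` and `F = t·∑ⱼ Mᵢⱼ·Gⱼ` for every `i`, with `M`
invertible, then `F·((t-c) + a) = t` where `a` is the sum of the entries of
`M⁻¹`. -/
theorem stmt_4 (K : Type*) [Field K] (k : ℕ) (hk : 0 < k)
    (M : Matrix (Fin k) (Fin k) K) (hM : IsUnit M.det)
    (t c F : K) (G : Fin k → K)
    (h1 : (t - c) * F + t * (∑ i, G i) = t)
    (h2 : ∀ i, F = t * ∑ j, M i j * G j) :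
    F * ((t - c) + ∑ i, ∑ j, M⁻¹ i j) = t := by
  have hinv : ∀ i l, ∑ j, M⁻¹ i j * M j l = if i = l then 1 else 0 := by
    intro i l
    have := Matrix.nonsing_inv_mul M hM
    have := congrFun (congrFun this i) l
    simpa [Matrix.mul_apply, Matrix.one_apply] using this
  have key : F * (∑ i, ∑ j, M⁻¹ i j) = t * ∑ i, G i := by
    calc F * (∑ i, ∑ j, M⁻¹ i j) = ∑ i, ∑ j, M⁻¹ i j * F := by
          rw [Finset.mul_sum]
          refine Finset.sum_congr rfl fun i _ => ?_
          rw [Finset.mul_sum]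
          exact Finset.sum_congr rfl fun j _ => mul_comm _ _
      _ = ∑ i, ∑ j, M⁻¹ i j * (t * ∑ l, M j l * G l) := by
          refine Finset.sum_congr rfl fun i _ => Finset.sum_congr rfl fun j _ => ?_
          rw [← h2 j]
      _ = t * ∑ i, ∑ l, (∑ j, M⁻¹ i j * M j l) * G l := by
          rw [Finset.mul_sum]
          refine Finset.sum_congr rfl fun i _ => ?_
          rw [Finset.mul_sum]
          simp_rw [Finset.sum_mul, Finset.mul_sum]
          rw [Finset.sum_comm]
          refine Finset.sum_congr rfl fun l _ => Finset.sum_congr rfl fun j _ => by ring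
      _ = t * ∑ i, G i := by
          congr 1
          refine Finset.sum_congr rfl fun i _ => ?_
          simp [hinv]
  rw [mul_add, key, mul_comm F (t - c), h1]
end

section
/- Let q ≥ 2 and m ≥ 1 be integers, and let S be the set of words w : Fin m → Fin q such that w(m−1) = q−1 and w(i) ≠ q−1 for all i < m−1. Then S has exactly (q−1)^{m−1} elements, and for all u, v ∈ S (including u = v) and every integer ℓ with 1 ≤ ℓ ≤ m−1, u does not overlap v at shift ℓ; that is, there exists an index j with j + ℓ ≤ m−1 such that u(j+ℓ) ≠ v(j). -/
/-- Construction 1: the set `S` of words of length `m` over `{0,…,q-1}` ending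
in the symbol `q-1` and containing no other occurrence of `q-1` has exactly
`(q-1)^{m-1}` elements, and no word of `S` overlaps any word of `S` (itself
included) at any shift `ℓ` with `1 ≤ ℓ ≤ m-1`. -/
theorem stmt_5 (q m : ℕ) (hq : 2 ≤ q) (hm : 1 ≤ m)
    (S : Set (Fin m → Fin q))
    (hS : S = {w : Fin m → Fin q |
      (∀ i : Fin m, (i : ℕ) = m - 1 → (w i : ℕ) = q - 1) ∧
      (∀ i : Fin m, (i : ℕ) < m - 1 → (w i : ℕ) ≠ q - 1)}) :
    Nat.card S = (q - 1) ^ (m - 1) ∧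
    ∀ u ∈ S, ∀ v ∈ S, ∀ ℓ : ℕ, 1 ≤ ℓ → ℓ ≤ m - 1 →
      ∃ j k : Fin m, (k : ℕ) = (j : ℕ) + ℓ ∧ u k ≠ v j := by
  subst hS
  constructor
  · -- cardinality
    have e : {w : Fin m → Fin q |
        (∀ i : Fin m, (i : ℕ) = m - 1 → (w i : ℕ) = q - 1) ∧
        (∀ i : Fin m, (i : ℕ) < m - 1 → (w i : ℕ) ≠ q - 1)} ≃
        (Fin (m - 1) → Fin (q - 1)) :=
      { toFun := fun w i => ⟨(w.1 ⟨i, by omega⟩ : ℕ), by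
          have hw := w.2
          have h1 : (w.1 ⟨i.1, by omega⟩ : ℕ) ≠ q - 1 := hw.2 ⟨i.1, by omega⟩ i.2
          have h2 := (w.1 ⟨i.1, by omega⟩).2
          omega⟩
        invFun := fun f => ⟨fun i =>
          if h : (i : ℕ) < m - 1 then ⟨(f ⟨i, h⟩ : ℕ), by
            have := (f ⟨i, h⟩).2; omega⟩ else ⟨q - 1, by omega⟩, by
          constructor
          · intro i hi
            simp only [dif_neg (show ¬ (i : ℕ) < m - 1 by omega)]
          · intro i hi
            simp only [dif_pos hi]
            have := (f ⟨i, hi⟩).2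
            omega⟩
        left_inv := fun w => by
          apply Subtype.ext
          funext i
          by_cases h : (i : ℕ) < m - 1
          · simp only [dif_pos h]
          · simp only [dif_neg h]
            have hw := w.2
            have hi : (i : ℕ) = m - 1 := by have := i.2; omega
            exact Fin.ext (hw.1 i hi).symm
        right_inv := fun f => by
          funext i
          simp only [dif_pos i.2]
        }
    rw [Nat.card_congr e, Nat.card_eq_fintype_card, Fintype.card_fun,
      Fintype.card_fin, Fintype.card_fin]
  · intro u hu v hv ℓ hℓ1 hℓm
    refine ⟨⟨m - 1 - ℓ, by omega⟩, ⟨m - 1, by omega⟩, by simp; omega, ?_⟩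
    have h1 : (u ⟨m - 1, by omega⟩ : ℕ) = q - 1 := hu.1 _ rfl
    have h2 : (v ⟨m - 1 - ℓ, by omega⟩ : ℕ) ≠ q - 1 := hv.2 _ (by simp; omega)
    intro h
    exact h2 (by rw [← congrArg Fin.val h, h1])
end

section
/- Let q ≥ 2 and m ≥ 2 be integers, and let S be the set of words w : Fin m → Fin q such that w(m−1) = q−1 and w(i) ≠ q−1 for all i < m−1. Then S is maximal in the following sense: for every word u : Fin m → Fin q with u ∉ S, there exist a word v ∈ S and an integer ℓ with 1 ≤ ℓ ≤ m−1 such that either u overlaps v at shift ℓ (u(j+ℓ) = v(j) for all j with j+ℓ ≤ m−1) or v overlaps u at shift ℓ (v(j+ℓ) = u(j) for all j with j+ℓ ≤ m−1). -/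
/-- Maximality of Construction 1: for every word `u` of length `m` not in `S`,
there is a word `v ∈ S` and a shift `1 ≤ ℓ ≤ m-1` at which `u` overlaps `v`
or `v` overlaps `u`. -/
theorem stmt_6 (q m : ℕ) (hq : 2 ≤ q) (hm : 2 ≤ m)
    (S : Set (Fin m → Fin q))
    (hS : S = {w : Fin m → Fin q |
      (∀ i : Fin m, (i : ℕ) = m - 1 → (w i : ℕ) = q - 1) ∧
      (∀ i : Fin m, (i : ℕ) < m - 1 → (w i : ℕ) ≠ q - 1)}) :
    ∀ u : Fin m → Fin q, u ∉ S →
      ∃ v ∈ S, ∃ ℓ : ℕ, 1 ≤ ℓ ∧ ℓ ≤ m - 1 ∧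
        ((∀ j k : Fin m, (k : ℕ) = (j : ℕ) + ℓ → u k = v j) ∨
         (∀ j k : Fin m, (k : ℕ) = (j : ℕ) + ℓ → v k = u j)) := by
  subst hS
  intro u hu
  classical
  by_cases hcase : ∃ n : ℕ, n < m - 1 ∧ ∃ h : n < m, (u ⟨n, h⟩ : ℕ) = q - 1
  · -- minimal such index
    set P : ℕ → Prop := fun n => n < m - 1 ∧ ∃ h : n < m, (u ⟨n, h⟩ : ℕ) = q - 1 with hP
    have hPd : DecidablePred P := fun n => by
      unfold P; infer_instance
    have hex : ∃ n, P n := hcase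
    let i₀ := Nat.find hex
    have hi₀ : P i₀ := Nat.find_spec hex
    have hmin : ∀ n < i₀, ¬ P n := fun n hn => Nat.find_min hex hn
    obtain ⟨hi₀lt, hi₀m, hi₀val⟩ := hi₀
    set ℓ : ℕ := m - 1 - i₀ with hℓ
    have hℓ1 : 1 ≤ ℓ := by omega
    have hℓm : ℓ ≤ m - 1 := by omega
    set v : Fin m → Fin q := fun k =>
      if h : ℓ ≤ (k : ℕ) then u ⟨(k : ℕ) - ℓ, by omega⟩ else ⟨0, by omega⟩ with hv
    refine ⟨v, ⟨?_, ?_⟩, ℓ, hℓ1, hℓm, Or.inr ?_⟩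
    · intro k hk
      simp only [hv]
      rw [dif_pos (by omega)]
      have : ((⟨(k : ℕ) - ℓ, by omega⟩ : Fin m)) = (⟨i₀, hi₀m⟩ : Fin m) := by
        ext; simp; omega
      rw [this]; exact hi₀val
    · intro k hk
      simp only [hv]
      by_cases h : ℓ ≤ (k : ℕ)
      · rw [dif_pos h]
        have hlt : (k : ℕ) - ℓ < i₀ := by omega
        have := hmin _ hlt
        simp only [hP, not_and, not_exists] at this
        exact this (by omega) (by omega)
      · rw [dif_neg h]
        simp; omega
    · intro j k hjk
      have hk : (k : ℕ) < m := k.isLt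
      simp only [hv]
      rw [dif_pos (by omega)]
      congr 1
      ext; simp; omega
  · -- u has no q-1 before position m-1; since u ∉ S, u (m-1) ≠ q-1, so u has no q-1 at all
    push_neg at hcase
    have hnot : ∀ i : Fin m, (i : ℕ) < m - 1 → (u i : ℕ) ≠ q - 1 := by
      intro i hi
      exact hcase i hi i.isLt
    have hlast : ∃ i : Fin m, (i : ℕ) = m - 1 ∧ (u i : ℕ) ≠ q - 1 := by
      by_contra hc
      push_neg at hc
      exact hu ⟨hc, hnot⟩
    obtain ⟨i₁, hi₁, hi₁val⟩ := hlast
    set v : Fin m → Fin q := fun k =>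
      if (k : ℕ) = 0 then u i₁ else if (k : ℕ) = m - 1 then ⟨q - 1, by omega⟩
      else ⟨0, by omega⟩ with hv
    refine ⟨v, ⟨?_, ?_⟩, m - 1, by omega, le_refl _, Or.inl ?_⟩
    · intro k hk
      simp only [hv]
      rw [if_neg (by omega), if_pos hk]
    · intro k hk
      simp only [hv]
      by_cases h : (k : ℕ) = 0
      · rw [if_pos h]; exact hi₁val
      · rw [if_neg h, if_neg (by omega)]; simp; omega
    · intro j k hjk
      have hk : (k : ℕ) < m := k.isLt
      have hj0 : (j : ℕ) = 0 := by omega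
      have hkm : (k : ℕ) = m - 1 := by omega
      simp only [hv]
      rw [if_pos hj0]
      congr 1
      ext; omega
end

section
/- Let q ≥ 2 and m ≥ 2 be integers, let I be a nonempty proper subset of Fin q with ℓ elements (so 1 ≤ ℓ ≤ q−1), and let r be an integer with 1 ≤ r < m. Let S be the set of words x : Fin m → Fin q such that x(j) ∉ I for all j < m−r and x(j) ∈ I for all j with m−r ≤ j ≤ m−1. Then S has exactly (q−ℓ)^{m−r}·ℓ^r elements, and for all u, v ∈ S (including u = v) and every integer s with 1 ≤ s ≤ m−1, u does not overlap v at shift s; that is, there exists an index j with j + s ≤ m−1 such that u(j+s) ≠ v(j). -/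
/-- Construction 3: given a nonempty proper subset `I` of the alphabet `Fin q`
and `1 ≤ r < m`, the set `S` of words whose first `m-r` letters avoid `I` and
whose last `r` letters lie in `I` has exactly `(q-ℓ)^{m-r}·ℓ^r` elements
(`ℓ = #I`), and no word of `S` overlaps any word of `S` at any shift
`1 ≤ s ≤ m-1`. -/
theorem stmt_7 (q m r : ℕ) (hq : 2 ≤ q) (hm : 2 ≤ m)
    (I : Finset (Fin q)) (hI : I.Nonempty) (hIproper : I ≠ Finset.univ)
    (hr1 : 1 ≤ r) (hrm : r < m)
    (S : Set (Fin m → Fin q))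
    (hS : S = {x : Fin m → Fin q |
      (∀ j : Fin m, (j : ℕ) < m - r → x j ∉ I) ∧
      (∀ j : Fin m, m - r ≤ (j : ℕ) → x j ∈ I)}) :
    Nat.card S = (q - I.card) ^ (m - r) * I.card ^ r ∧
    ∀ u ∈ S, ∀ v ∈ S, ∀ s : ℕ, 1 ≤ s → s ≤ m - 1 →
      ∃ j k : Fin m, (k : ℕ) = (j : ℕ) + s ∧ u k ≠ v j := by
  constructor
  · -- cardinality
    have hset : S = ↑(Fintype.piFinset fun i : Fin m =>
        if (i : ℕ) < m - r then Iᶜ else I) := by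
      rw [hS]
      ext x
      simp only [Set.mem_setOf_eq, Finset.coe_sort_coe, Finset.mem_coe,
        Fintype.mem_piFinset]
      constructor
      · rintro ⟨h1, h2⟩ i
        by_cases h : (i : ℕ) < m - r
        · simp [h, h1 i h]
        · simp [h, h2 i (le_of_not_gt h)]
      · intro h
        constructor
        · intro j hj
          have := h j
          simp [hj] at this
          exact this
        · intro j hj
          have := h j
          simp [Nat.not_lt_of_le hj] at this
          exact this
    rw [hset, Nat.card_coe_set_eq, Set.ncard_coe_finset,
      Fintype.card_piFinset]
    have : ∀ i : Fin m, (if (i : ℕ) < m - r then Iᶜ else I).card =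
        if (i : ℕ) < m - r then q - I.card else I.card := by
      intro i
      by_cases h : (i : ℕ) < m - r <;>
        simp [h, Finset.card_compl]
    simp_rw [this]
    rw [Finset.prod_ite, Finset.prod_const, Finset.prod_const]
    congr 2
    · -- number of i with i < m - r is m - r
      rw [show (Finset.filter (fun i : Fin m => (i : ℕ) < m - r) Finset.univ)
          = Finset.Iio ⟨m - r, by omega⟩ from ?_]
      · simp
      · ext i
        simp [Fin.lt_def]
    · rw [show (Finset.filter (fun i : Fin m => ¬ (i : ℕ) < m - r) Finset.univ)
          = Finset.Ici ⟨m - r, by omega⟩ from ?_]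
      · rw [Fin.card_Ici]
        simp only [Fin.val_mk]
        omega
      · ext i
        simp [Fin.le_def, Nat.not_lt]
  · intro u hu v hv s hs1 hs2
    subst hS
    obtain ⟨hu1, hu2⟩ := hu
    obtain ⟨hv1, hv2⟩ := hv
    by_cases hc : s < m - r
    · refine ⟨⟨m - r - s, by omega⟩, ⟨m - r, by omega⟩, by simp; omega, ?_⟩
      intro h
      exact hv1 ⟨m - r - s, by omega⟩ (by simpa using by omega)
        (h ▸ hu2 ⟨m - r, by omega⟩ (by simp))
    · refine ⟨⟨0, by omega⟩, ⟨s, by omega⟩, by simp, ?_⟩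
      intro h
      exact hv1 ⟨0, by omega⟩ (by simp; omega)
        (h ▸ hu2 ⟨s, by omega⟩ (by simp; omega))
end

section
/- Let q ≥ 2 and n ≥ 1 be integers, let G be a finite set of words w : Fin n → Fin q, let μ be the infinite product probability measure on X = (ℕ → Fin q) whose every factor is the uniform probability measure on Fin q, let σ : X → X be the left shift σ(x)(i) = x(i+1), and let H = {x ∈ X : ∃ w ∈ G, ∀ i : Fin n, x(i) = w(i)} be the union of cylinders based at the words of G. For r ∈ ℕ let f(r) denote the number of words u : Fin r → Fin q containing no occurrence of any word of G, and assume f(r) > 0 for all r and that (1/m)·ln f(m) converges to a real number h as m → ∞. Then −(1/m)·ln μ(X \ ⋃_{j=0}^{m} σ^{−j} H) converges to ln q − h as m → ∞; that is, the escape rate into H equals ln q − h. -/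
open MeasureTheory Filter

/-- Escape rate into a union of cylinders for the full shift: if `f(m)` counts
the words of length `m` avoiding every word of `G`, `f` is positive, and
`(1/m)·ln f(m) → h`, then the escape rate into the hole `H` (the union of the
cylinders based at the words of `G`) equals `ln q - h`. -/
theorem stmt_11 (q n : ℕ) (hq : 2 ≤ q) (hn : 1 ≤ n)
    (G : Finset (Fin n → Fin q))
    (μ : Measure (ℕ → Fin q)) [IsProbabilityMeasure μ]
    (hμ : ∀ (r : ℕ) (w : Fin r → Fin q),
      μ {x : ℕ → Fin q | ∀ i : Fin r, x (i : ℕ) = w i} = 1 / (q : ENNReal) ^ r)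
    (σ : (ℕ → Fin q) → (ℕ → Fin q)) (hσ : ∀ (x : ℕ → Fin q) (i : ℕ), σ x i = x (i + 1))
    (H : Set (ℕ → Fin q))
    (hH : H = {x : ℕ → Fin q | ∃ w ∈ G, ∀ i : Fin n, x (i : ℕ) = w i})
    (f : ℕ → ℕ)
    (hf : ∀ r : ℕ, f r = Nat.card {u : Fin r → Fin q |
      ¬ ∃ j : ℕ, j + n ≤ r ∧ ∃ w ∈ G, ∀ (i : Fin n) (k : Fin r),
        (k : ℕ) = j + (i : ℕ) → u k = w i})
    (hfpos : ∀ r : ℕ, 0 < f r)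
    (h : ℝ)
    (hconv : Tendsto (fun m : ℕ => Real.log (f m) / (m : ℝ)) atTop (nhds h)) :
    Tendsto (fun m : ℕ =>
        -(1 / (m : ℝ)) * Real.log ((μ {x : ℕ → Fin q | ∀ j : ℕ, j ≤ m → σ^[j] x ∉ H}).toReal))
      atTop (nhds (Real.log q - h)) := by
  classical
  have hq0 : (0:ℝ) < q := by positivity
  have hiter : ∀ (j : ℕ) (x : ℕ → Fin q) (i : ℕ), σ^[j] x i = x (i + j) := by
    intro j
    induction j with
    | zero => intro x i; simp
    | succ j ih =>
      intro x i
      rw [Function.iterate_succ_apply, ih, hσ]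
      ring_nf
  -- measure of survivor set
  have key : ∀ m : ℕ, μ {x : ℕ → Fin q | ∀ j : ℕ, j ≤ m → σ^[j] x ∉ H}
      = (f (m + n) : ENNReal) * (1 / (q:ENNReal) ^ (m+n)) := by
    intro m
    set r := m + n with hr
    set S : Set (Fin r → Fin q) := {u : Fin r → Fin q |
      ¬ ∃ j : ℕ, j + n ≤ r ∧ ∃ w ∈ G, ∀ (i : Fin n) (k : Fin r),
        (k : ℕ) = j + (i : ℕ) → u k = w i} with hS
    set C : (Fin r → Fin q) → Set (ℕ → Fin q) :=
      fun u => {x : ℕ → Fin q | ∀ i : Fin r, x (i : ℕ) = u i} with hC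
    have hset : {x : ℕ → Fin q | ∀ j : ℕ, j ≤ m → σ^[j] x ∉ H}
        = ⋃ u : S, C (u : Fin r → Fin q) := by
      ext x
      simp only [Set.mem_setOf_eq, Set.mem_iUnion]
      constructor
      · intro hx
        refine ⟨⟨fun i => x i, ?_⟩, fun i => rfl⟩
        intro ⟨j, hjn, w, hwG, hw⟩
        have hjm : j ≤ m := by omega
        refine hx j hjm ?_
        rw [hH]
        refine ⟨w, hwG, fun i => ?_⟩
        rw [hiter]
        have hlt : j + (i : ℕ) < r := by omega
        have := hw i ⟨j + i, hlt⟩ rfl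
        simpa [Nat.add_comm] using this
      · rintro ⟨⟨u, hu⟩, hxu⟩ j hjm hmem
        rw [hH] at hmem
        obtain ⟨w, hwG, hw⟩ := hmem
        refine hu ⟨j, by omega, w, hwG, fun i k hk => ?_⟩
        have : x (k : ℕ) = u k := hxu k
        rw [← this, hk]
        have := hw i
        rw [hiter] at this
        rwa [Nat.add_comm] at this
    rw [hset]
    have hmeas : ∀ u : Fin r → Fin q, MeasurableSet (C u) := by
      intro u
      have : C u = ⋂ i : Fin r, (fun x : ℕ → Fin q => x (i : ℕ)) ⁻¹' {u i} := by
        ext x; simp [hC, Set.mem_iInter]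
      rw [this]
      exact MeasurableSet.iInter fun i => (measurable_pi_apply _) (measurableSet_singleton _)
    have hdisj : Pairwise (Function.onFun Disjoint fun u : S => C (u : Fin r → Fin q)) := by
      rintro ⟨u, hu⟩ ⟨v, hv⟩ huv
      simp only [Function.onFun]
      rw [Set.disjoint_left]
      rintro x hxu hxv
      apply huv
      apply Subtype.ext
      funext i
      exact (hxu i).symm.trans (hxv i)
    have : Fintype S := Fintype.ofFinite _
    rw [measure_iUnion hdisj (fun u => hmeas u)]
    have : ∀ u : S, μ (C (u : Fin r → Fin q)) = 1 / (q:ENNReal) ^ r :=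
      fun u => hμ r u
    rw [tsum_congr this, tsum_eq_sum (s := Finset.univ) (by simp), Finset.sum_const,
      Finset.card_univ, ← Nat.card_eq_fintype_card, hS, ← hf r]
    simp [nsmul_eq_mul]
  -- positivity facts
  have hqR : (q:ℝ) ≠ 0 := ne_of_gt hq0
  have hqE0 : (q:ENNReal) ≠ 0 := Nat.cast_ne_zero.mpr (by omega)
  have hqEtop : (q:ENNReal) ≠ ⊤ := ENNReal.natCast_ne_top q
  have htoReal : ∀ m : ℕ,
      ((μ {x : ℕ → Fin q | ∀ j : ℕ, j ≤ m → σ^[j] x ∉ H}).toReal)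
        = (f (m+n) : ℝ) / (q:ℝ) ^ (m+n) := by
    intro m
    rw [key m]
    simp [ENNReal.toReal_mul, ENNReal.toReal_inv, div_eq_mul_inv]
  -- log formula
  have hlog : ∀ m : ℕ,
      Real.log ((f (m+n) : ℝ) / (q:ℝ) ^ (m+n))
        = Real.log (f (m+n)) - (m+n : ℕ) * Real.log q := by
    intro m
    rw [Real.log_div (by exact_mod_cast (hfpos (m+n)).ne') (by positivity), Real.log_pow]
  -- the limit
  have t1 : Tendsto (fun m : ℕ => ((m:ℝ) + n) / m) atTop (nhds 1) := by
    have : Tendsto (fun m : ℕ => 1 + (n:ℝ) * (1/m)) atTop (nhds (1 + (n:ℝ) * 0)) :=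
      tendsto_const_nhds.add (tendsto_const_nhds.mul tendsto_one_div_atTop_nhds_zero_nat)
    simp only [mul_zero, add_zero] at this
    refine this.congr' ?_
    filter_upwards [eventually_ge_atTop 1] with m hm
    have hm0 : (m:ℝ) ≠ 0 := by positivity
    field_simp
  have t2 : Tendsto (fun m : ℕ => Real.log (f (m+n)) / ((m:ℝ)+n)) atTop (nhds h) := by
    have := hconv.comp (tendsto_add_atTop_nat n)
    refine this.congr ?_
    intro m
    simp [Function.comp]
  have tmain : Tendsto (fun m : ℕ =>
      (((m:ℝ)+n)/m) * (Real.log q - Real.log (f (m+n)) / ((m:ℝ)+n)))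
      atTop (nhds (Real.log q - h)) := by
    have := t1.mul ((tendsto_const_nhds (x := Real.log q)).sub t2)
    simpa using this
  refine tmain.congr' ?_
  filter_upwards [eventually_ge_atTop 1] with m hm
  rw [htoReal m, hlog m]
  have hm0 : (m:ℝ) ≠ 0 := by positivity
  have hmn0 : (m:ℝ) + n ≠ 0 := by positivity
  push_cast
  field_simp
  ring
end

section
/- Let P be the 6×6 real matrix all of whose entries equal 1 except that P(0,0) = 0 and P(0,1) = 0. Then (5 + √41)/2 is an eigenvalue of P, and every complex eigenvalue z of P satisfies |z| ≤ (5 + √41)/2. -/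
/-- The 6×6 transition matrix obtained from the all-ones matrix by zeroing the
entries `(0,0)` and `(0,1)` has `(5+√41)/2` as an eigenvalue, and every complex
eigenvalue has modulus at most `(5+√41)/2`. -/
theorem stmt_17 (P : Matrix (Fin 6) (Fin 6) ℝ)
    (hP : ∀ i j, P i j = if i = 0 ∧ (j = 0 ∨ j = 1) then 0 else 1) :
    ((5 + Real.sqrt 41) / 2 ∈ spectrum ℝ P) ∧
    ∀ z ∈ spectrum ℂ (P.map (Complex.ofReal)),
      ‖z‖ ≤ (5 + Real.sqrt 41) / 2 := by
  set lam : ℝ := (5 + Real.sqrt 41) / 2 with hlam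
  have h41 : Real.sqrt 41 ^ 2 = 41 := Real.sq_sqrt (by norm_num)
  have hs5 : 5 < Real.sqrt 41 := by nlinarith [Real.sqrt_nonneg 41]
  set a : ℝ := (Real.sqrt 41 - 5) / 2 with haa
  have ha : 0 < a := by rw [haa]; linarith
  have hal : a * lam = 4 := by rw [haa, hlam]; nlinarith
  set v : Fin 6 → ℝ := fun i => if i = 0 then a else 1 with hv
  have hvpos : ∀ i, 0 < v i := by
    intro i; rw [hv]; dsimp only; split <;> [exact ha; norm_num]
  -- the key row-sum identity
  have hrow : ∀ i : Fin 6, ∑ j, P i j * v j = lam * v i := by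
    intro i
    fin_cases i <;>
      simp [Fin.sum_univ_six, hP, hv] <;> nlinarith
  constructor
  · rw [spectrum.mem_iff]
    intro h
    have hinj := Matrix.mulVec_injective_iff_isUnit.mpr h
    have hv0 : v ≠ 0 := by
      intro hv0
      have h0 : v 0 = 0 := congrFun hv0 0
      rw [hv] at h0
      simp only [if_pos rfl] at h0
      exact absurd h0 (ne_of_gt ha)
    refine hv0 (hinj ?_)
    rw [Matrix.mulVec_zero]
    have hstep : Matrix.mulVec (algebraMap ℝ (Matrix (Fin 6) (Fin 6) ℝ) lam - P) v
        = lam • v - Matrix.mulVec P v := by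
      rw [Matrix.sub_mulVec, Algebra.algebraMap_eq_smul_one,
        Matrix.smul_mulVec, Matrix.one_mulVec]
    rw [hstep]
    funext i
    have hPv : Matrix.mulVec P v i = ∑ j, P i j * v j := by
      simp [Matrix.mulVec, dotProduct]
    show lam * v i - Matrix.mulVec P v i = 0
    rw [hPv, hrow i, sub_self]
  · intro z hz
    rw [spectrum.mem_iff, Matrix.isUnit_iff_isUnit_det, isUnit_iff_ne_zero,
      not_not, ← Matrix.exists_mulVec_eq_zero_iff] at hz
    obtain ⟨w, hw0, hw⟩ := hz
    have hstep : Matrix.mulVec (algebraMap ℂ (Matrix (Fin 6) (Fin 6) ℂ) z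
          - P.map Complex.ofReal) w
        = z • w - Matrix.mulVec (P.map Complex.ofReal) w := by
      rw [Matrix.sub_mulVec, Algebra.algebraMap_eq_smul_one,
        Matrix.smul_mulVec, Matrix.one_mulVec]
    rw [hstep, sub_eq_zero] at hw
    have heig : ∀ i, ∑ j, (P i j : ℂ) * w j = z * w i := by
      intro i
      have := congrFun hw i
      simp only [Pi.smul_apply, smul_eq_mul] at this
      rw [this]
      simp [Matrix.mulVec, dotProduct, Matrix.map_apply]
    -- choose index maximizing |w i| / v i
    obtain ⟨i, -, hi⟩ := Finset.exists_max_image Finset.univ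
      (fun j => ‖w j‖ / v j) ⟨0, Finset.mem_univ 0⟩
    have hmax : ∀ j, ‖w j‖ * v i ≤ ‖w i‖ * v j := by
      intro j
      have := hi j (Finset.mem_univ j)
      rw [div_le_div_iff₀ (hvpos j) (hvpos i)] at this
      exact this
    have hwi : 0 < ‖w i‖ := by
      rcases Function.ne_iff.mp hw0 with ⟨k, hk⟩
      have h1 : 0 < ‖w k‖ * v i :=
        mul_pos (by simpa using (norm_pos_iff.mpr hk)) (hvpos i)
      have h2 := lt_of_lt_of_le h1 (hmax k)
      nlinarith [hvpos k, norm_nonneg (w i)]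
    have hP0 : ∀ i j : Fin 6, 0 ≤ P i j := by
      intro i j; rw [hP]; split <;> norm_num
    -- main estimate
    have key : ‖z‖ * (‖w i‖ * v i)
        ≤ lam * (‖w i‖ * v i) := by
      have h1 : ‖z‖ * ‖w i‖ ≤ ∑ j, P i j * ‖w j‖ := by
        rw [← norm_mul, ← heig i]
        calc ‖∑ j, (P i j : ℂ) * w j‖
            ≤ ∑ j, ‖(P i j : ℂ) * w j‖ := norm_sum_le _ _
          _ = ∑ j, P i j * ‖w j‖ := by
              refine Finset.sum_congr rfl fun j _ => ?_
              rw [norm_mul, Complex.norm_real, Real.norm_eq_abs, abs_of_nonneg (hP0 i j)]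
      have h2 : (∑ j, P i j * ‖w j‖) * v i
          ≤ ∑ j, P i j * ‖w i‖ * v j := by
        rw [Finset.sum_mul]
        refine Finset.sum_le_sum fun j _ => ?_
        calc P i j * ‖w j‖ * v i = P i j * (‖w j‖ * v i) := by ring
          _ ≤ P i j * (‖w i‖ * v j) :=
              mul_le_mul_of_nonneg_left (hmax j) (hP0 i j)
          _ = P i j * ‖w i‖ * v j := by ring
      have h3 : ∑ j, P i j * ‖w i‖ * v j
          = ‖w i‖ * (lam * v i) := by
        rw [← hrow i, Finset.mul_sum]
        refine Finset.sum_congr rfl fun j _ => by ring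
      calc ‖z‖ * (‖w i‖ * v i)
          = ‖z‖ * ‖w i‖ * v i := by ring
        _ ≤ (∑ j, P i j * ‖w j‖) * v i :=
            mul_le_mul_of_nonneg_right h1 (hvpos i).le
        _ ≤ ∑ j, P i j * ‖w i‖ * v j := h2
        _ = lam * (‖w i‖ * v i) := by rw [h3]; ring
    have hpos : 0 < ‖w i‖ * v i := mul_pos hwi (hvpos i)
    exact le_of_mul_le_mul_right
      (by simpa [mul_comm] using key) hpos
end

section
/- Let Q be the 6×6 real matrix all of whose entries equal 1 except that Q(0,4) = 0 and Q(0,5) = 0. Then 3 + √7 is an eigenvalue of Q, and every complex eigenvalue z of Q satisfies |z| ≤ 3 + √7. -/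
open Matrix
/-- The 6×6 transition matrix obtained from the all-ones matrix by zeroing the
entries `(0,4)` and `(0,5)` has `3+√7` as an eigenvalue, and every complex
eigenvalue has modulus at most `3+√7`. -/
theorem stmt_18 (Q : Matrix (Fin 6) (Fin 6) ℝ)
    (hQ : ∀ i j, Q i j = if i = 0 ∧ (j = 4 ∨ j = 5) then 0 else 1) :
    (3 + Real.sqrt 7 ∈ spectrum ℝ Q) ∧
    ∀ z ∈ spectrum ℂ (Q.map (Complex.ofReal)),
      ‖z‖ ≤ 3 + Real.sqrt 7 := by
  constructor
  · have h7 : Real.sqrt 7 ^ 2 = 7 := Real.sq_sqrt (by norm_num)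
    rw [spectrum.mem_iff, Matrix.isUnit_iff_isUnit_det, isUnit_iff_ne_zero, not_not,
        ← Matrix.exists_mulVec_eq_zero_iff]
    refine ⟨(fun i => if i = 0 then Real.sqrt 7 - 2 else 1), ?_, ?_⟩
    · intro h
      have h1 := congrFun h 1
      simp at h1
    · funext i
      fin_cases i <;>
        simp [Matrix.mulVec, dotProduct, Fin.sum_univ_six, hQ,
          Matrix.sub_apply, Matrix.algebraMap_matrix_apply] <;>
        nlinarith [h7]
  · have hs7 : (0:ℝ) ≤ Real.sqrt 7 := Real.sqrt_nonneg 7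
    intro z hz
    rw [spectrum.mem_iff, Matrix.isUnit_iff_isUnit_det, isUnit_iff_ne_zero, not_not,
        ← Matrix.exists_mulVec_eq_zero_iff] at hz
    obtain ⟨v, hv, hmv⟩ := hz
    have E : ∀ i, ((algebraMap ℂ (Matrix (Fin 6) (Fin 6) ℂ) z - Q.map Complex.ofReal) *ᵥ v) i = 0 :=
      fun i => congrFun hmv i
    have e0 := E 0
    have e1 := E 1
    have e2 := E 2
    have e3 := E 3
    have e4 := E 4
    have e5 := E 5
    simp [Matrix.mulVec, dotProduct, Fin.sum_univ_six, hQ,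
      Matrix.sub_apply, Matrix.algebraMap_matrix_apply, Matrix.map_apply] at e0 e1 e2 e3 e4 e5
    by_cases hz0 : z = 0
    · simp [hz0]; positivity
    -- all of v1..v5 equal, v0 = (z-5) v1
    have h12 : v 1 = v 2 := by
      have : z * v 1 = z * v 2 := by linear_combination e1 - e2
      exact mul_left_cancel₀ hz0 this
    have h13 : v 1 = v 3 := by
      have : z * v 1 = z * v 3 := by linear_combination e1 - e3
      exact mul_left_cancel₀ hz0 this
    have h14 : v 1 = v 4 := by
      have : z * v 1 = z * v 4 := by linear_combination e1 - e4
      exact mul_left_cancel₀ hz0 this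
    have h15 : v 1 = v 5 := by
      have : z * v 1 = z * v 5 := by linear_combination e1 - e5
      exact mul_left_cancel₀ hz0 this
    have ha : v 0 = (z - 5) * v 1 := by linear_combination -e1 + h12 + h13 + h14 + h15
    have hquad0 : v 1 * (z ^ 2 - 6 * z + 2) = 0 := by
      linear_combination e0 - (z - 1) * ha - h12 - h13
    have hb : v 1 ≠ 0 := by
      intro hb
      apply hv
      have h0 : v 0 = 0 := by rw [ha, hb, mul_zero]
      funext i
      fin_cases i
      · exact h0
      · exact hb
      · exact h12.symm.trans hb
      · exact h13.symm.trans hb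
      · exact h14.symm.trans hb
      · exact h15.symm.trans hb
    have hquad : z ^ 2 - 6 * z + 2 = 0 := by
      rcases mul_eq_zero.mp hquad0 with h | h
      · exact absurd h hb
      · exact h
    have hsq : (z - 3) ^ 2 = 7 := by linear_combination hquad
    have habs2 : ‖z - 3‖ ^ 2 = 7 := by
      rw [← norm_pow, hsq]
      simp
    have habs : ‖z - 3‖ = Real.sqrt 7 := by
      rw [← Real.sqrt_sq (norm_nonneg _), habs2]
    calc ‖z‖ = ‖(z - 3) + 3‖ := by ring_nf
      _ ≤ ‖z - 3‖ + ‖(3:ℂ)‖ := norm_add_le _ _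
      _ = Real.sqrt 7 + 3 := by rw [habs]; simp
      _ = 3 + Real.sqrt 7 := by ring
end
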